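/- (Convergence of STRIDE.) Assume (P) has an optimal solution X* and a dual feasible pair (y*, S*) with ⟨C, X*⟩ = ⟨b, y*⟩. Let ε > 0, M > 0, c > 0, let ε_k ≥ 0 with Σ_{k≥1} k ε_k < ∞, and let σ_k > 0 (k ≥ 0) be nondecreasing with σ_k ≥ c√k. Let X^0 ∈ S^n_+ and let sequences X̄^k, X^k, y^k, S^k (k ≥ 1) satisfy for every k ≥ 1: X̄^k ⪰ 0, S^k ⪰ 0, ‖A(X̄^k) − b‖ ≤ ε_k, A*y^k + S^k − C = (1/σ_k)(X̄^k − X^{k−1}), ⟨X̄^k, S^k⟩ = 0, and ‖y^k‖ ≤ M; moreover for every k ≥ 1, either X^k = X̄^k, or X^k ∈ F_P and ⟨C, X^k⟩ < min{⟨C, X̄^k⟩, min_{X ∈ V_{k−1}} ⟨C, X⟩} − ε, where V_{k−1} consists of X^0 (if X^0 ∈ F_P) together with all X^j, 1 ≤ j ≤ k−1, for which X^j ≠ X̄^j (the minimum over an empty set being +∞). Then ⟨C, X̄^k⟩ converges to the optimal value ⟨C, X*⟩ of (P) as k → ∞. -/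

import Mathlib

set_option autoImplicit false

open Matrix Finset Filter
open scoped RealInnerProductSpace

noncomputable section

/-- The trace inner product `⟨X, Y⟩ = trace (Xᵀ * Y)` on real `n × n` matrices. -/
def mInner {n : ℕ} (X Y : Matrix (Fin n) (Fin n) ℝ) : ℝ := (Xᵀ * Y).trace

/-- The Frobenius norm induced by the trace inner product. -/
def mNorm {n : ℕ} (X : Matrix (Fin n) (Fin n) ℝ) : ℝ := Real.sqrt (mInner X X)

/-- `ℝ^m` with the Euclidean inner product. -/
abbrev Vec (m : ℕ) := EuclideanSpace ℝ (Fin m)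

lemma mInner_eq {n : ℕ} (X Y : Matrix (Fin n) (Fin n) ℝ) :
    mInner X Y = ∑ j : Fin n, ∑ i : Fin n, X i j * Y i j := by
  simp [mInner, Matrix.trace, Matrix.mul_apply, Matrix.diag, Matrix.transpose_apply]

lemma mInner_comm {n : ℕ} (X Y : Matrix (Fin n) (Fin n) ℝ) : mInner X Y = mInner Y X := by
  simp only [mInner_eq, mul_comm]

lemma mInner_add_left {n : ℕ} (X Y Z : Matrix (Fin n) (Fin n) ℝ) :
    mInner (X + Y) Z = mInner X Z + mInner Y Z := by
  simp [mInner_eq, add_mul, Finset.sum_add_distrib]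

lemma mInner_sub_left {n : ℕ} (X Y Z : Matrix (Fin n) (Fin n) ℝ) :
    mInner (X - Y) Z = mInner X Z - mInner Y Z := by
  simp [mInner_eq, sub_mul, Finset.sum_sub_distrib]

lemma mInner_sub_right {n : ℕ} (X Y Z : Matrix (Fin n) (Fin n) ℝ) :
    mInner X (Y - Z) = mInner X Y - mInner X Z := by
  simp [mInner_eq, mul_sub, Finset.sum_sub_distrib]

lemma mInner_smul_left {n : ℕ} (r : ℝ) (X Y : Matrix (Fin n) (Fin n) ℝ) :
    mInner (r • X) Y = r * mInner X Y := by
  simp [mInner_eq, Finset.mul_sum, mul_assoc]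

lemma mInner_self_nonneg {n : ℕ} (X : Matrix (Fin n) (Fin n) ℝ) : 0 ≤ mInner X X := by
  rw [mInner_eq]
  refine Finset.sum_nonneg fun j _ => Finset.sum_nonneg fun i _ => mul_self_nonneg _

lemma psd_trace_nonneg {n : ℕ} {P : Matrix (Fin n) (Fin n) ℝ} (h : P.PosSemidef) :
    0 ≤ P.trace := by
  rw [Matrix.trace]
  refine Finset.sum_nonneg fun i _ => ?_
  exact h.diag_nonneg

lemma mInner_psd_nonneg {n : ℕ} {P Q : Matrix (Fin n) (Fin n) ℝ}
    (hP : P.PosSemidef) (hQ : Q.PosSemidef) : 0 ≤ mInner P Q := by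
  obtain ⟨L, hL⟩ : ∃ L : Matrix (Fin n) (Fin n) ℝ, Q = Lᴴ * L := by
    open scoped MatrixOrder in
    obtain ⟨B, hB⟩ := CStarAlgebra.nonneg_iff_eq_star_mul_self.mp hQ.nonneg
    exact ⟨B, hB⟩
  have hPt : Pᵀ = P := by
    rw [← Matrix.conjTranspose_eq_transpose_of_trivial]; exact hP.1
  have hL' : Lᴴ = Lᵀ := Matrix.conjTranspose_eq_transpose_of_trivial L
  rw [mInner, hPt, hL, hL', show P * (Lᵀ * L) = (P * Lᵀ) * L by rw [mul_assoc],
    Matrix.trace_mul_cycle]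
  have hpsd : (L * P * Lᴴ).PosSemidef := hP.mul_mul_conjTranspose_same L
  rw [hL'] at hpsd
  simpa [mul_assoc] using psd_trace_nonneg hpsd

lemma mInner_polar {n : ℕ} (u v w : Matrix (Fin n) (Fin n) ℝ) :
    2 * mInner (u - v) (u - w) =
      mInner (u - v) (u - v) + mInner (u - w) (u - w) - mInner (v - w) (v - w) := by
  simp only [mInner_eq, Matrix.sub_apply, Finset.mul_sum, ← Finset.sum_add_distrib,
    ← Finset.sum_sub_distrib]
  exact Finset.sum_congr rfl fun j _ => Finset.sum_congr rfl fun i _ => by ring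

/-- global convergence of STRIDE (Theorem 2 in the paper). -/
theorem stride_convergence {n m : ℕ}
    (A : Matrix (Fin n) (Fin n) ℝ →ₗ[ℝ] Vec m)
    (Aadj : Vec m →ₗ[ℝ] Matrix (Fin n) (Fin n) ℝ)
    (hadj : ∀ (X : Matrix (Fin n) (Fin n) ℝ) (ξ : Vec m), ⟪A X, ξ⟫ = mInner X (Aadj ξ))
    (b : Vec m) (C : Matrix (Fin n) (Fin n) ℝ) (hC : C.IsSymm)
    -- (P) has an optimal solution Xstar
    (Xstar : Matrix (Fin n) (Fin n) ℝ) (hXstar : Xstar.PosSemidef)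
    (hAXstar : A Xstar = b)
    (hXstarOpt : ∀ X' : Matrix (Fin n) (Fin n) ℝ, X'.PosSemidef → A X' = b →
      mInner C Xstar ≤ mInner C X')
    -- a dual feasible pair with zero duality gap
    (ystar : Vec m) (Sstar : Matrix (Fin n) (Fin n) ℝ)
    (hdualfeas : Aadj ystar + Sstar = C) (hSstar : Sstar.PosSemidef)
    (hgap : mInner C Xstar = ⟪b, ystar⟫)
    -- parameters
    (ε M c : ℝ) (hε : 0 < ε) (hM : 0 < M) (hc : 0 < c)
    (εs : ℕ → ℝ) (hεs : ∀ k, 0 ≤ εs k)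
    (hsum : Summable (fun k : ℕ => (k : ℝ) * εs k))
    (σ : ℕ → ℝ) (hσpos : ∀ k, 0 < σ k) (hσmono : Monotone σ)
    (hσgrow : ∀ k : ℕ, c * Real.sqrt (k : ℝ) ≤ σ k)
    -- the STRIDE iterates
    (X Xbar : ℕ → Matrix (Fin n) (Fin n) ℝ)
    (y : ℕ → Vec m) (S : ℕ → Matrix (Fin n) (Fin n) ℝ)
    (hX0 : (X 0).PosSemidef)
    (hXbarpsd : ∀ k, 1 ≤ k → (Xbar k).PosSemidef)
    (hSpsd : ∀ k, 1 ≤ k → (S k).PosSemidef)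
    (hfeas : ∀ k, 1 ≤ k → ‖A (Xbar k) - b‖ ≤ εs k)
    (hdual : ∀ k, 1 ≤ k → Aadj (y k) + S k - C = (1 / σ k) • (Xbar k - X (k - 1)))
    (hcomp : ∀ k, 1 ≤ k → mInner (Xbar k) (S k) = 0)
    (hy : ∀ k, 1 ≤ k → ‖y k‖ ≤ M)
    -- the accept/reject policy: either keep the projected point, or accept a strictly
    -- better feasible point (better than Xbar k and all previously accepted points by ε)
    (hpolicy : ∀ k, 1 ≤ k →
      X k = Xbar k ∨
        (A (X k) = b ∧ (X k).PosSemidef ∧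
          mInner C (X k) < mInner C (Xbar k) - ε ∧
          (A (X 0) = b → mInner C (X k) < mInner C (X 0) - ε) ∧
          ∀ j, 1 ≤ j → j ≤ k - 1 → X j ≠ Xbar j →
            mInner C (X k) < mInner C (X j) - ε)) :
    Tendsto (fun k => mInner C (Xbar k)) atTop (nhds (mInner C Xstar)) := by
  set pstar := mInner C Xstar with hpstar
  set Y := ‖ystar‖ with hY
  -- lower bound on the objective value of Xbar k
  have low : ∀ k, 1 ≤ k → pstar - Y * εs k ≤ mInner C (Xbar k) := by
    intro k hk
    have h1 : mInner C (Xbar k)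
        = ⟪b, ystar⟫ + ⟪A (Xbar k) - b, ystar⟫ + mInner Sstar (Xbar k) := by
      rw [← hdualfeas, mInner_add_left, mInner_comm (Aadj ystar) (Xbar k), ← hadj,
        inner_sub_left]
      ring
    have h3 : -(Y * εs k) ≤ ⟪A (Xbar k) - b, ystar⟫ := by
      have hcs := abs_real_inner_le_norm (A (Xbar k) - b) ystar
      have hb := hfeas k hk
      have hn := abs_le.mp (le_trans hcs (by nlinarith [norm_nonneg ystar, hεs k]) :
        |⟪A (Xbar k) - b, ystar⟫| ≤ εs k * Y)
      nlinarith [hn.1]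
    have h4 : 0 ≤ mInner Sstar (Xbar k) := mInner_psd_nonneg hSstar (hXbarpsd k hk)
    rw [h1, ← hgap]
    linarith
  -- upper bound on the objective value of Xbar k
  have up : ∀ k, 1 ≤ k → mInner C (Xbar k) - pstar ≤ M * εs k +
      (1 / (2 * σ k)) * (mInner (X (k-1) - Xstar) (X (k-1) - Xstar)
        - mInner (Xbar k - Xstar) (Xbar k - Xstar)) := by
    intro k hk
    have hs := hσpos k
    have hCeq : C = Aadj (y k) + S k - (1 / σ k) • (Xbar k - X (k-1)) := by
      calc C = Aadj (y k) + S k - (Aadj (y k) + S k - C) := by abel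
        _ = _ := by rw [hdual k hk]
    have e1 : mInner (Aadj (y k)) (Xbar k - Xstar) = ⟪A (Xbar k) - b, y k⟫ := by
      rw [mInner_comm, ← hadj, map_sub, hAXstar]
    have e2 : mInner (S k) (Xbar k - Xstar) = - mInner (S k) Xstar := by
      rw [mInner_sub_right, mInner_comm (S k) (Xbar k), hcomp k hk]
      ring
    have expand : mInner C (Xbar k) - pstar = ⟪A (Xbar k) - b, y k⟫ - mInner (S k) Xstar
        - (1 / σ k) * mInner (Xbar k - X (k-1)) (Xbar k - Xstar) := by
      have h0 : mInner C (Xbar k - Xstar) = mInner C (Xbar k) - pstar := by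
        rw [mInner_sub_right, hpstar]
      rw [← h0]
      conv_lhs => rw [hCeq]
      rw [mInner_sub_left, mInner_add_left, mInner_smul_left, e1, e2]
      ring
    have b1 : ⟪A (Xbar k) - b, y k⟫ ≤ εs k * M :=
      le_trans (real_inner_le_norm _ _)
        (mul_le_mul (hfeas k hk) (hy k hk) (norm_nonneg _) (hεs k))
    have b2 : 0 ≤ mInner (S k) Xstar := mInner_psd_nonneg (hSpsd k hk) hXstar
    have b3 : (mInner (Xbar k - Xstar) (Xbar k - Xstar)
        - mInner (X (k-1) - Xstar) (X (k-1) - Xstar)) / 2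
        ≤ mInner (Xbar k - X (k-1)) (Xbar k - Xstar) := by
      have hpol := mInner_polar (Xbar k) (X (k-1)) Xstar
      have hnn := mInner_self_nonneg (Xbar k - X (k-1))
      linarith
    have h1s : (0:ℝ) < 1 / σ k := by positivity
    have hmul := mul_le_mul_of_nonneg_left b3 (le_of_lt h1s)
    have hid : -((1 / σ k) * ((mInner (Xbar k - Xstar) (Xbar k - Xstar)
        - mInner (X (k-1) - Xstar) (X (k-1) - Xstar)) / 2))
        = (1 / (2 * σ k)) * (mInner (X (k-1) - Xstar) (X (k-1) - Xstar)
        - mInner (Xbar k - Xstar) (Xbar k - Xstar)) := by ring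
    linarith
  -- only finitely many acceptances
  have hfin : {k : ℕ | 1 ≤ k ∧ X k ≠ Xbar k}.Finite := by
    by_contra hinf
    set p : ℕ → Prop := fun k => 1 ≤ k ∧ X k ≠ Xbar k with hp
    have hinf' : (setOf p).Infinite := hinf
    have hmem : ∀ i, p (Nat.nth p i) := fun i => Nat.nth_mem_of_infinite hinf' i
    have hmono := Nat.nth_strictMono hinf'
    have haccept : ∀ i, A (X (Nat.nth p i)) = b ∧ (X (Nat.nth p i)).PosSemidef ∧
        ∀ j, 1 ≤ j → j ≤ Nat.nth p i - 1 → X j ≠ Xbar j →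
          mInner C (X (Nat.nth p i)) < mInner C (X j) - ε := by
      intro i
      obtain ⟨h1, hne⟩ := hmem i
      rcases hpolicy _ h1 with h | h
      · exact absurd h hne
      · exact ⟨h.1, h.2.1, h.2.2.2.2⟩
    have hstep : ∀ i, mInner C (X (Nat.nth p (i+1))) < mInner C (X (Nat.nth p i)) - ε := by
      intro i
      have hlt := hmono (lt_add_one i)
      exact (haccept (i+1)).2.2 _ (hmem i).1 (by omega) (hmem i).2
    have hlb : ∀ i, pstar ≤ mInner C (X (Nat.nth p i)) := fun i =>
      hXstarOpt _ (haccept i).2.1 (haccept i).1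
    have hlin : ∀ i : ℕ, mInner C (X (Nat.nth p i)) ≤ mInner C (X (Nat.nth p 0)) - i * ε := by
      intro i
      induction i with
      | zero => simp
      | succ i ih =>
        have := hstep i
        push_cast
        push_cast at ih
        linarith
    obtain ⟨i, hi⟩ := exists_nat_gt ((mInner C (X (Nat.nth p 0)) - pstar) / ε)
    have h5 := hlb i
    have h6 := hlin i
    rw [div_lt_iff₀ hε] at hi
    linarith
  obtain ⟨K, hK⟩ := hfin.bddAbove
  have hEq : ∀ k, K + 1 ≤ k → X k = Xbar k := by
    intro k hk
    by_contra hne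
    have : k ≤ K := hK ⟨by omega, hne⟩
    omega
  -- summability of the errors
  have hsum1 : Summable (fun k : ℕ => εs (k+1)) := by
    have h1 : Summable (fun k : ℕ => ((k+1 : ℕ) : ℝ) * εs (k+1)) :=
      (summable_nat_add_iff 1).mpr hsum
    refine Summable.of_nonneg_of_le (fun k => hεs _) (fun k => ?_) h1
    have : (1:ℝ) ≤ ((k+1 : ℕ) : ℝ) := by exact_mod_cast Nat.one_le_iff_ne_zero.mpr (by omega)
    nlinarith [hεs (k+1)]
  have hsumε : Summable εs := (summable_nat_add_iff 1).mp hsum1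
  have hsum' : Summable (fun i : ℕ => εs (K+1+i)) :=
    ((summable_nat_add_iff (K+1)).mpr hsumε).congr (fun i => by rw [add_comm])
  -- the telescoping quantities
  set D : ℕ → ℝ := fun k => mInner (X k - Xstar) (X k - Xstar) with hD
  set t : ℕ → ℝ := fun k => D k / (2 * σ (k+1)) with ht
  have htnn : ∀ k, 0 ≤ t k := by
    intro k
    have := mInner_self_nonneg (X k - Xstar)
    have := hσpos (k+1)
    positivity
  set g : ℕ → ℝ := fun i => mInner C (Xbar (K+1+i)) - pstar + Y * εs (K+1+i) with hg
  have hg0 : ∀ i, 0 ≤ g i := by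
    intro i
    have := low (K+1+i) (by omega)
    simp only [hg]
    linarith
  have hgle : ∀ i, g i ≤ (M + Y) * εs (K+1+i) + (t (K+i) - t (K+i+1)) := by
    intro i
    have hj1 : 1 ≤ K+1+i := by omega
    have h := up (K+1+i) hj1
    have hj' : K+1+i - 1 = K+i := by omega
    rw [hj'] at h
    have hXj : X (K+1+i) = Xbar (K+1+i) := hEq _ (by omega)
    have hDj : mInner (Xbar (K+1+i) - Xstar) (Xbar (K+1+i) - Xstar) = D (K+1+i) := by
      rw [hD]; simp [hXj]
    rw [hDj] at h
    have hidx : K+1+i = K+i+1 := by omega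
    rw [hidx] at h
    have htK : t (K+i) = D (K+i) / (2 * σ (K+i+1)) := rfl
    have ht2 : t (K+i+1) ≤ D (K+i+1) / (2 * σ (K+i+1)) := by
      have hDnn : 0 ≤ D (K+i+1) := mInner_self_nonneg _
      have h1 := hσpos (K+i+1)
      have h2 : σ (K+i+1) ≤ σ (K+i+1+1) := hσmono (by omega)
      show D (K+i+1) / (2 * σ (K+i+1+1)) ≤ D (K+i+1) / (2 * σ (K+i+1))
      apply div_le_div_of_nonneg_left hDnn (by positivity) (by linarith)
    have hring : (1 / (2 * σ (K+i+1))) * (D (K+i) - D (K+i+1))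
        = D (K+i) / (2 * σ (K+i+1)) - D (K+i+1) / (2 * σ (K+i+1)) := by
      ring
    simp only [hg, hidx]
    linarith [h, ht2]
  -- bounded partial sums hence summable, hence g → 0
  have hpartial : ∀ N, ∑ i ∈ Finset.range N, g i
      ≤ (M + Y) * (∑' i, εs (K+1+i)) + t K := by
    intro N
    have h2 : ∑ i ∈ Finset.range N, (t (K+i) - t (K+i+1)) = t (K+0) - t (K+N) :=
      Finset.sum_range_sub' (fun i => t (K+i)) N
    have h3 : ∑ i ∈ Finset.range N, εs (K+1+i) ≤ ∑' i, εs (K+1+i) :=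
      Summable.sum_le_tsum _ (fun i _ => hεs _) hsum'
    have h4 : 0 ≤ t (K+N) := htnn _
    have hMY : 0 ≤ M + Y := by positivity
    have h5 : t (K+0) = t K := by norm_num
    have h6 := mul_le_mul_of_nonneg_left h3 hMY
    calc ∑ i ∈ Finset.range N, g i
        ≤ ∑ i ∈ Finset.range N, ((M + Y) * εs (K+1+i) + (t (K+i) - t (K+i+1))) :=
          Finset.sum_le_sum fun i _ => hgle i
      _ = (M + Y) * (∑ i ∈ Finset.range N, εs (K+1+i)) + (t (K+0) - t (K+N)) := by
          rw [Finset.sum_add_distrib, ← Finset.mul_sum, h2]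
      _ ≤ (M + Y) * (∑' i, εs (K+1+i)) + t K := by rw [h5]; linarith
  have hgsum : Summable g :=
    summable_of_sum_range_le hg0 hpartial
  have hgtend : Tendsto g atTop (nhds 0) := hgsum.tendsto_atTop_zero
  have hεtend : Tendsto (fun i => εs (K+1+i)) atTop (nhds 0) := hsum'.tendsto_atTop_zero
  have hcomb : Tendsto (fun i => g i - Y * εs (K+1+i) + pstar) atTop
      (nhds (0 - Y * 0 + pstar)) :=
    (hgtend.sub (hεtend.const_mul Y)).add_const pstar
  rw [show (0 : ℝ) - Y * 0 + pstar = pstar by ring] at hcomb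
  have hfinal : Tendsto (fun i => mInner C (Xbar (K+1+i))) atTop (nhds pstar) := by
    refine hcomb.congr fun i => ?_
    simp only [hg]
    ring
  rw [← tendsto_add_atTop_iff_nat (K+1)]
  exact hfinal.congr fun i => by rw [add_comm]
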